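/- Let q be a prime power, n a positive integer, and L(X) = Σ_{i=0}^{n-1} d_i X^{q^i} a q-polynomial with coefficients in F_{q^n}. Let M be the n×n matrix over F_{q^n} whose (i,j) entry is d_{(j-i) mod n}^{q^i} for 0 ≤ i,j ≤ n-1. Then the kernel of the F_q-linear map x ↦ L(x) from F_{q^n} to itself has F_q-dimension equal to n − rank(M). -/

import Mathlib

open Module Submodule Matrix

/-- Linear independence of vectors with entries in `K` is preserved under base change. -/
lemma qpoly_aux_li_map {K L : Type*} [Field K] [Field L] [Algebra K L]
    {m ι : Type*} [Fintype ι] {v : ι → m → K}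
    (hv : LinearIndependent K v) :
    LinearIndependent L (fun i => (algebraMap K L) ∘ v i) := by
  rw [Fintype.linearIndependent_iff] at hv ⊢
  intro g hg
  set b := Basis.ofVectorSpace K L with hb
  have key : ∀ j, ∀ i, b.repr (g i) j = 0 := by
    intro j
    refine hv (fun i => b.repr (g i) j) ?_
    funext k
    have hk := congrFun hg k
    simp only [Finset.sum_apply, Pi.smul_apply, Function.comp_apply, smul_eq_mul,
      Pi.zero_apply] at hk
    have h2 : ∑ i, v i k • g i = 0 := by
      rw [← hk]
      refine Finset.sum_congr rfl fun i _ => ?_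
      rw [Algebra.smul_def, mul_comm]
    have h3 := congrArg (fun z => b.repr z j) h2
    simp only [map_sum, _root_.map_smul, Finsupp.coe_smul, Finsupp.coe_finset_sum,
      Finset.sum_apply, Pi.smul_apply, smul_eq_mul, map_zero, Finsupp.coe_zero,
      Pi.zero_apply] at h3
    simpa [smul_eq_mul, mul_comm] using h3
  intro i
  have : b.repr (g i) = 0 := by
    ext j; exact key j i
  simpa using congrArg b.repr.symm this

/-- Rank of a matrix is invariant under mapping entries by `algebraMap` of a field extension. -/
lemma qpoly_aux_rank_map {K L m p : Type*} [Field K] [Field L] [Algebra K L]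
    [Fintype m] [Fintype p] (A : Matrix m p K) :
    (A.map (algebraMap K L)).rank = A.rank := by
  classical
  obtain ⟨s, hsub, hspan, hli⟩ := exists_linearIndependent K (Set.range Aᵀ)
  have hsfin : s.Finite := (Set.finite_range Aᵀ).subset hsub
  haveI : Fintype s := hsfin.fintype
  set f : (m → K) → (m → L) := fun w => (algebraMap K L) ∘ w with hf
  set ℓ : (m → K) →ₗ[K] (m → L) := (Algebra.linearMap K L).compLeft m with hℓ
  have hℓf : ∀ w, ℓ w = f w := fun w => rfl
  -- the L-matrix columns
  have hcols : Set.range (A.map (algebraMap K L))ᵀ = f '' Set.range Aᵀ := by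
    refine Eq.trans ?_ (Set.range_comp f (fun i => Aᵀ i))
    rfl
  -- span over L of all columns = span over L of f '' s
  have hspan2 : span L (Set.range (A.map (algebraMap K L))ᵀ) = span L (f '' s) := by
    rw [hcols]
    apply le_antisymm
    · rw [span_le]
      rintro - ⟨c, hc, rfl⟩
      have hc' : c ∈ span K s := hspan ▸ subset_span hc
      have h4 : ℓ c ∈ span K (⇑ℓ '' s) :=
        Submodule.apply_mem_span_image_of_mem_span ℓ hc'
      rw [Set.image_congr' hℓf] at h4
      exact span_le_restrictScalars K L (f '' s) h4
    · exact span_mono (Set.image_mono hsub)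
  -- linear independence of f '' s over L
  have hliL : LinearIndependent L (fun x : s => f x.val) :=
    qpoly_aux_li_map hli
  have hrangef : Set.range (fun x : s => f x.val) = f '' s := by
    rw [show (fun x : s => f x.val) = f ∘ Subtype.val from rfl, Set.range_comp,
      Subtype.range_coe]
  -- compute both ranks
  rw [Matrix.rank_eq_finrank_span_cols, Matrix.rank_eq_finrank_span_cols]
  show finrank L (span L (Set.range (A.map (algebraMap K L))ᵀ)) = finrank K (span K (Set.range Aᵀ))
  rw [hspan2,
    ← hrangef, finrank_span_eq_card hliL, ← hspan]
  have h6 := finrank_span_eq_card (R := K) hli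
  rw [Subtype.range_coe] at h6
  exact h6.symm

section Main

theorem qpoly_kernel_dim (q n : ℕ) (hq : IsPrimePow q) (hn : 0 < n)
    (K Lf : Type) [Field K] [Fintype K] [Field Lf] [Fintype Lf]
    [Algebra K Lf] (hcard : Fintype.card K = q)
    (hdim : Module.finrank K Lf = n)
    (d : Fin n → Lf)
    (φ : Lf →ₗ[K] Lf)
    (hφ : ∀ x, φ x = ∑ i : Fin n, d i * x ^ (q ^ (i : ℕ)))
    (M : Matrix (Fin n) (Fin n) Lf)
    (hM : ∀ i j : Fin n,
      M i j = (d ⟨((j : ℕ) + n - (i : ℕ)) % n, Nat.mod_lt _ hn⟩) ^ (q ^ (i : ℕ))) :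
    Module.finrank K (LinearMap.ker φ) = n - M.rank := by
  classical
  haveI : NeZero n := ⟨hn.ne'⟩
  have hq2 : 2 ≤ q := IsPrimePow.two_le hq
  -- characteristic facts
  obtain ⟨p, k, hpp, hk, hpk⟩ := hq
  have hp : Nat.Prime p := Nat.prime_iff.2 hpp
  haveI : Fact p.Prime := ⟨hp⟩
  obtain ⟨p', hcK⟩ := CharP.exists K
  haveI := hcK
  obtain ⟨k', hp', hcard'⟩ := FiniteField.card K p'
  have hpeq : p = p' := by
    have hdvd : p ∣ p' ^ (k' : ℕ) := by
      rw [← hcard', hcard, ← hpk]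
      exact dvd_pow_self p hk.ne'
    exact (Nat.prime_dvd_prime_iff_eq hp hp').1 (Nat.Prime.dvd_of_dvd_pow hp hdvd)
  haveI hcKp : CharP K p := hpeq ▸ hcK
  haveI : CharP Lf p := charP_of_injective_algebraMap (algebraMap K Lf).injective p
  -- basis and cardinality
  set e : Basis (Fin n) K Lf := Module.finBasisOfFinrankEq K Lf hdim with he
  have hcardLf : Fintype.card Lf = q ^ n := by
    rw [Module.card_fintype e, hcard, Fintype.card_fin]
  -- Frobenius-power arithmetic
  have hqn : ∀ x : Lf, x ^ q ^ n = x := fun x => by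
    rw [← hcardLf]; exact FiniteField.pow_card x
  have hns : ∀ (s : ℕ) (x : Lf), x ^ q ^ (n * s) = x := by
    intro s
    induction s with
    | zero => simp
    | succ s ih =>
      intro x
      rw [Nat.mul_succ, pow_add, pow_mul, ih, hqn]
  have hred : ∀ (a : ℕ) (x : Lf), x ^ q ^ a = x ^ q ^ (a % n) := by
    intro a x
    conv_lhs => rw [← Nat.div_add_mod a n]
    rw [pow_add, pow_mul, hns]
  have hfrobadd : ∀ (i : ℕ) (x y : Lf), (x + y) ^ q ^ i = x ^ q ^ i + y ^ q ^ i := by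
    intro i x y
    rw [← hpk, ← pow_mul, add_pow_char_pow]
  have hfrobsmul : ∀ (i : ℕ) (a : K) (x : Lf), (a • x) ^ q ^ i = a • x ^ q ^ i := by
    intro i a x
    have ha : a ^ q ^ i = a := by rw [← hcard]; exact FiniteField.pow_card_pow i a
    rw [Algebra.smul_def, mul_pow, ← map_pow, ha, Algebra.smul_def]
  -- the Frobenius powers as K-linear maps
  set τ : ℕ → (Lf →ₗ[K] Lf) := fun i =>
    { toFun := fun x => x ^ q ^ i
      map_add' := hfrobadd i
      map_smul' := fun a x => hfrobsmul i a x } with hτ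
  have hτapp : ∀ (i : ℕ) (x : Lf), τ i x = x ^ q ^ i := fun _ _ => rfl
  -- independence of characters
  have hchar : ∀ g : Fin n → Lf, (∀ x : Lf, ∑ t, g t * x ^ q ^ (t : ℕ) = 0) →
      ∀ t, g t = 0 := by
    intro g hg
    have hinj : Function.Injective
        (fun t : Fin n => (powMonoidHom (q ^ (t : ℕ)) : Lf →* Lf)) := by
      intro t s hts
      have hpt : ∀ x : Lf, x ^ q ^ (t : ℕ) = x ^ q ^ (s : ℕ) := fun x =>
        DFunLike.congr_fun hts x
      obtain ⟨g0, hg0⟩ := IsCyclic.exists_generator (α := Lfˣ)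
      have hord : orderOf g0 = q ^ n - 1 := by
        rw [orderOf_eq_card_of_forall_mem_zpowers hg0, Nat.card_eq_fintype_card,
          Fintype.card_units, hcardLf]
      have hu : g0 ^ q ^ (t : ℕ) = g0 ^ q ^ (s : ℕ) := by
        ext
        push_cast
        exact hpt g0
      rw [pow_eq_pow_iff_modEq, hord] at hu
      have hqeq : q ^ (t : ℕ) = q ^ (s : ℕ) := by
        rcases Nat.eq_or_lt_of_le hn with h1 | h1
        · have : Subsingleton (Fin n) := by rw [← h1]; infer_instance
          rw [Subsingleton.elim t s]
        · -- n ≥ 2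
          have hbound : ∀ u : Fin n, q ^ (u : ℕ) < q ^ n - 1 := by
            intro u
            have h2 : q ^ (u : ℕ) ≤ q ^ (n - 1) :=
              Nat.pow_le_pow_right (by omega) (by omega)
            have h3 : q ^ (n - 1) * 2 ≤ q ^ (n - 1) * q :=
              Nat.mul_le_mul_left _ hq2
            have h4 : q ^ (n - 1) * q = q ^ n := by
              rw [← pow_succ]
              congr 1
              omega
            have h5 : q ^ 1 ≤ q ^ (n - 1) :=
              Nat.pow_le_pow_right (by omega) (by omega)
            rw [pow_one] at h5
            omega
          have htb := hbound t
          have hsb := hbound s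
          exact Nat.ModEq.eq_of_lt_of_lt hu htb hsb
      exact Fin.ext (Nat.pow_right_injective hq2 hqeq)
    have hli := (linearIndependent_monoidHom Lf Lf).comp _ hinj
    rw [Fintype.linearIndependent_iff] at hli
    refine hli g ?_
    funext x
    simpa [Function.comp, powMonoidHom, Finset.sum_apply] using hg x
  -- matrices
  set A : Matrix (Fin n) (Fin n) K := LinearMap.toMatrix e e φ with hA
  set B : Matrix (Fin n) (Fin n) Lf :=
    Matrix.of (fun t j : Fin n => e j ^ q ^ (t : ℕ)) with hB
  -- index arithmetic
  have hidx : ∀ a b : ℕ, a < n → b < n → ((a + b) % n + n - b) % n = a := by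
    intro a b ha hb
    have h1 : (a + b) % n + n - b = (a + b) % n + (n - b) := by omega
    rw [h1, Nat.mod_add_mod]
    have h2 : a + b + (n - b) = a + n := by omega
    rw [h2, Nat.add_mod_right, Nat.mod_eq_of_lt ha]
  -- key row identity
  have hkey : ∀ (i : Fin n) (x : Lf),
      ∑ t, M i t * x ^ q ^ (t : ℕ) = (φ x) ^ q ^ (i : ℕ) := by
    intro i x
    have hR : (φ x) ^ q ^ (i : ℕ)
        = ∑ m : Fin n, d m ^ q ^ (i : ℕ) * x ^ q ^ (((m : ℕ) + (i : ℕ)) % n) := by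
      rw [hφ x, ← hτapp (i : ℕ), map_sum]
      refine Finset.sum_congr rfl fun m _ => ?_
      rw [hτapp, mul_pow, ← pow_mul, ← pow_add, hred ((m : ℕ) + (i : ℕ)) x]
    rw [hR]
    refine (Fintype.sum_equiv (Equiv.addRight i)
      (fun m : Fin n => d m ^ q ^ (i : ℕ) * x ^ q ^ (((m : ℕ) + (i : ℕ)) % n))
      (fun t : Fin n => M i t * x ^ q ^ (t : ℕ)) ?_).symm
    intro m
    show d m ^ q ^ (i : ℕ) * x ^ q ^ (((m : ℕ) + (i : ℕ)) % n)
        = M i (m + i) * x ^ q ^ ((m + i : Fin n) : ℕ)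
    rw [hM i (m + i)]
    have h1 : (⟨(((m + i : Fin n) : ℕ) + n - (i : ℕ)) % n, Nat.mod_lt _ hn⟩ : Fin n) = m := by
      apply Fin.ext
      show (((m + i : Fin n) : ℕ) + n - (i : ℕ)) % n = (m : ℕ)
      rw [Fin.val_add]
      exact hidx _ _ m.isLt i.isLt
    rw [h1, Fin.val_add]
  -- φ on basis via A
  have hφe : ∀ j : Fin n, ∑ kk : Fin n, A kk j • e kk = φ (e j) := by
    intro j
    have : ∀ kk : Fin n, A kk j = e.repr (φ (e j)) kk := fun kk =>
      LinearMap.toMatrix_apply e e φ kk j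
    simp only [this]
    exact e.sum_repr (φ (e j))
  -- the matrix identity M * B = B * A'
  have hMB : M * B = B * (A.map (algebraMap K Lf)) := by
    ext i j
    rw [Matrix.mul_apply, Matrix.mul_apply]
    have hL : ∑ t : Fin n, M i t * B t j = (φ (e j)) ^ q ^ (i : ℕ) := hkey i (e j)
    rw [hL]
    rw [← hφe j, ← hτapp (i : ℕ), map_sum]
    refine Finset.sum_congr rfl fun kk _ => ?_
    rw [hτapp, hfrobsmul, Algebra.smul_def]
    rw [mul_comm]
    rfl
  -- B is invertible
  have hBunit : IsUnit B.det := by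
    rw [← Matrix.isUnit_iff_isUnit_det, ← Matrix.linearIndependent_rows_iff_isUnit]
    rw [Fintype.linearIndependent_iff]
    intro g hg t
    refine hchar g ?_ t
    intro x
    have hF : (∑ s : Fin n, g s • τ (s : ℕ)) = (0 : Lf →ₗ[K] Lf) := by
      apply e.ext
      intro j
      have hgj := congrFun hg j
      simp only [Finset.sum_apply, Pi.smul_apply, Pi.zero_apply] at hgj
      simp only [LinearMap.sum_apply, LinearMap.smul_apply, LinearMap.zero_apply, hτapp]
      simpa [hB, smul_eq_mul] using hgj
    have := LinearMap.congr_fun hF x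
    simpa [LinearMap.sum_apply, LinearMap.smul_apply, hτapp, smul_eq_mul] using this
  -- rank computations
  have hr1 : M.rank = (A.map (algebraMap K Lf)).rank := by
    have h1 : (M * B).rank = M.rank :=
      Matrix.rank_mul_eq_left_of_isUnit_det B M hBunit
    have h2 : (B * (A.map (algebraMap K Lf))).rank = (A.map (algebraMap K Lf)).rank :=
      Matrix.rank_mul_eq_right_of_isUnit_det B _ hBunit
    rw [← h1, hMB, h2]
  have hr2 : (A.map (algebraMap K Lf)).rank = A.rank := qpoly_aux_rank_map A
  have hr3 : A.rank = finrank K (LinearMap.range φ) := by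
    have h3 := Matrix.rank_eq_finrank_range_toLin A e e
    rw [hA, Matrix.toLin_toMatrix] at h3
    exact h3
  have hrn := LinearMap.finrank_range_add_finrank_ker φ
  rw [hdim] at hrn
  have hrle : finrank K (LinearMap.range φ) ≤ n := by omega
  omega

end Main
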